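/- arXiv:0808.3656 — 4 statements merged into one kernel-verified Lean document; each statement's English description precedes it below -/
import Mathlib

section
/- Let X be a right-continuous supermartingale with respect to a filtration F, indexed by [0, T], and let Y be an adapted right-continuous process with X_t ≥ Y_t a.s. for every t. If Z is another right-continuous supermartingale dominating Y, and X has the property that X_t equals the essential supremum over stopping times τ ∈ [t, T] of E[Y_τ | F_t], then X_t ≤ Z_t a.s. for every t; i.e., the Snell envelope is the smallest right-continuous supermartingale dominating Y. -/
open MeasureTheory Filter


/-- Conditional expectation comparison from set integrals over a sub-σ-algebra. -/
lemma condexp_le_of_forall_setIntegral_le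
    {Ω : Type*} {m m0 : MeasurableSpace Ω} (hm : m ≤ m0) {P : Measure Ω} [IsFiniteMeasure P]
    {f g : Ω → ℝ} (hfi : Integrable f P) (hgi : Integrable g P)
    (hgm : StronglyMeasurable[m] g)
    (h : ∀ s, MeasurableSet[m] s → ∫ ω in s, f ω ∂P ≤ ∫ ω in s, g ω ∂P) :
    P[f|m] ≤ᵐ[P] g := by
  haveI : IsFiniteMeasure (P.trim hm) := isFiniteMeasure_trim hm
  refine ae_le_of_ae_le_trim (hm := hm) ?_
  refine ae_le_of_forall_setIntegral_le (μ := P.trim hm)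
    (integrable_condExp.trim hm stronglyMeasurable_condExp) (hgi.trim hm hgm) ?_
  intro s hs _
  rw [← setIntegral_trim hm stronglyMeasurable_condExp hs, ← setIntegral_trim hm hgm hs,
    setIntegral_condExp hm hfi hs]
  exact h s hs

/-- Discrete optional sampling for a right-continuous supermartingale along a grid. -/
lemma setIntegral_le_of_grid_stopping
    {Ω : Type*} {m0 : MeasurableSpace Ω} {P : Measure Ω} [IsProbabilityMeasure P]
    (ℱ : Filtration ℝ m0) {Z : ℝ → Ω → ℝ} (hZ : Supermartingale Z ℱ P)
    (t δ : ℝ) (hδ : 0 ≤ δ) (N : ℕ) (σ : Ω → ℕ) (hσN : ∀ ω, σ ω ≤ N)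
    (hσ : ∀ k : ℕ, MeasurableSet[ℱ (t + k * δ)] {ω | σ ω ≤ k})
    {s : Set Ω} (hs : MeasurableSet[ℱ t] s)
    {f : Ω → ℝ} (hfi : IntegrableOn f s P)
    (hfle : ∀ ω, f ω ≤ Z (t + σ ω * δ) ω) :
    ∫ ω in s, f ω ∂P ≤ ∫ ω in s, Z t ω ∂P := by
  classical
  set G : Filtration ℕ m0 :=
    { seq := fun k => ℱ (t + k * δ)
      mono' := fun i j hij => ℱ.mono (by
        have : (i : ℝ) * δ ≤ (j : ℝ) * δ :=
          mul_le_mul_of_nonneg_right (by exact_mod_cast hij) hδ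
        linarith)
      le' := fun k => ℱ.le _ } with hG
  have hGapp : ∀ k : ℕ, G k = ℱ (t + k * δ) := fun k => rfl
  set W : ℕ → Ω → ℝ := fun k => Z (t + k * δ) with hW
  have hWsuper : Supermartingale W G P :=
    ⟨fun k => hZ.stronglyAdapted _, fun i j hij => hZ.2.1 _ _ (by
      have : (i : ℝ) * δ ≤ (j : ℝ) * δ :=
        mul_le_mul_of_nonneg_right (by exact_mod_cast hij) hδ
      linarith), fun k => hZ.integrable _⟩
  have hsm : MeasurableSet[m0] s := ℱ.le t s hs
  have hsG : ∀ k, MeasurableSet[G k] s := fun k =>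
    (G.mono (Nat.zero_le k)) s (by
      have h0 : G 0 = ℱ t := by simp [hGapp]
      rw [h0]; exact hs)
  have hσst : IsStoppingTime G (fun ω => (σ ω : WithTop ℕ)) := fun k => by simpa using hσ k
  set σ' : Ω → ℕ := fun ω => if ω ∈ s then σ ω else 0 with hσ'
  have hσ'st : IsStoppingTime G (fun ω => (σ' ω : WithTop ℕ)) := by
    intro k
    suffices MeasurableSet[G k] {ω | σ' ω ≤ k} by simpa using this
    have : {ω | σ' ω ≤ k} = sᶜ ∪ (s ∩ {ω | σ ω ≤ k}) := by
      ext ω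
      by_cases hω : ω ∈ s <;> simp [σ', hω]
    rw [this]
    exact ((hsG k).compl).union ((hsG k).inter (hσ k))
  have hσ'N : ∀ ω, σ' ω ≤ N := fun ω => by
    by_cases hω : ω ∈ s <;> simp [σ', hω, hσN ω]
  -- optional stopping for the negated submartingale
  have hmono := hWsuper.neg.expected_stoppedValue_mono
    (isStoppingTime_const G 0) hσ'st (fun ω => WithTop.coe_le_coe.2 (Nat.zero_le _))
    (fun ω => WithTop.coe_le_coe.2 (hσ'N ω))
  have hint0 : Integrable (W 0) P := hWsuper.integrable 0
  have hintσ' : Integrable (stoppedValue W (fun ω => (σ' ω : WithTop ℕ))) P := by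
    have := integrable_stoppedValue ℕ hσ'st hWsuper.integrable (fun ω => WithTop.coe_le_coe.2 (hσ'N ω))
    exact this
  have hintσ : Integrable (stoppedValue W (fun ω => (σ ω : WithTop ℕ))) P := by
    exact integrable_stoppedValue ℕ hσst hWsuper.integrable (fun ω => WithTop.coe_le_coe.2 (hσN ω))
  have hkey : ∫ ω, stoppedValue W (fun ω => (σ' ω : WithTop ℕ)) ω ∂P ≤ ∫ ω, W 0 ω ∂P := by
    have h1 : stoppedValue (-W) (fun ω => (σ' ω : WithTop ℕ)) = -(stoppedValue W (fun ω => (σ' ω : WithTop ℕ))) := by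
      funext ω; simp [stoppedValue]
    have h2 : stoppedValue (-W) (fun _ => ((0 : ℕ) : WithTop ℕ)) = -(W 0) := by
      funext ω; simp [stoppedValue]
    rw [h1, stoppedValue_const] at hmono
    simp only [Pi.neg_apply, integral_neg, neg_le_neg_iff] at hmono
    exact hmono
  -- split integrals over s and sᶜ
  have hsplit1 : ∫ ω, stoppedValue W (fun ω => (σ' ω : WithTop ℕ)) ω ∂P
      = (∫ ω in s, stoppedValue W (fun ω => (σ ω : WithTop ℕ)) ω ∂P) + ∫ ω in sᶜ, W 0 ω ∂P := by
    rw [← integral_add_compl hsm hintσ']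
    congr 1
    · exact setIntegral_congr_fun hsm (fun ω hω => by simp [stoppedValue, σ', hω])
    · exact setIntegral_congr_fun hsm.compl (fun ω hω => by
        simp only [Set.mem_compl_iff] at hω
        simp [stoppedValue, σ', hω])
  have hsplit2 : ∫ ω, W 0 ω ∂P = (∫ ω in s, W 0 ω ∂P) + ∫ ω in sᶜ, W 0 ω ∂P :=
    (integral_add_compl hsm hint0).symm
  have hZs : ∫ ω in s, stoppedValue W (fun ω => (σ ω : WithTop ℕ)) ω ∂P ≤ ∫ ω in s, W 0 ω ∂P := by
    rw [hsplit1, hsplit2] at hkey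
    linarith
  have hW0 : ∀ ω, W 0 ω = Z t ω := fun ω => by simp [hW]
  calc ∫ ω in s, f ω ∂P ≤ ∫ ω in s, stoppedValue W (fun ω => (σ ω : WithTop ℕ)) ω ∂P := by
        refine setIntegral_mono_on hfi hintσ.integrableOn hsm (fun ω _ => ?_)
        exact hfle ω
    _ ≤ ∫ ω in s, W 0 ω ∂P := hZs
    _ = ∫ ω in s, Z t ω ∂P := by
        refine setIntegral_congr_fun hsm (fun ω _ => hW0 ω)

/-- Strong measurability of a grid-stopped value. -/
lemma stronglyMeasurable_grid_stopped
    {Ω : Type*} {m0 : MeasurableSpace Ω}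
    (ℱ : Filtration ℝ m0) {Y : ℝ → Ω → ℝ} (hYadp : Adapted ℱ Y)
    (t δ : ℝ) (hδ : 0 ≤ δ) (σ : Ω → ℕ)
    (hσ : ∀ k : ℕ, MeasurableSet[ℱ (t + k * δ)] {ω | σ ω ≤ k})
    (N : ℕ) (hσN : ∀ ω, σ ω ≤ N) :
    StronglyMeasurable (fun ω => Y (t + σ ω * δ) ω) := by
  classical
  set G : Filtration ℕ m0 :=
    { seq := fun k => ℱ (t + k * δ)
      mono' := fun i j hij => ℱ.mono (by
        have : (i : ℝ) * δ ≤ (j : ℝ) * δ :=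
          mul_le_mul_of_nonneg_right (by exact_mod_cast hij) hδ
        linarith)
      le' := fun k => ℱ.le _ } with hG
  have hadp : StronglyAdapted G (fun k => Y (t + k * δ)) := fun k => (hYadp _).stronglyMeasurable
  have hσst : IsStoppingTime G (fun ω => (σ ω : WithTop ℕ)) := fun k => by simpa using hσ k
  have := stronglyMeasurable_stoppedValue_of_le hadp.progMeasurable_of_discrete hσst
    (fun ω => WithTop.coe_le_coe.2 (hσN ω))
  exact this.mono (G.le N)
/-- The Snell envelope `X` of a bounded right-continuous adapted process `Y`
(i.e. `X t = ess sup over stopping times τ ∈ [t,T] of E[Y_τ | F_t]`) is the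
smallest right-continuous supermartingale dominating `Y`: any right-continuous
supermartingale `Z` with `Z ≥ Y` satisfies `X t ≤ Z t` a.s. for every `t ∈ [0,T]`. -/
theorem snell_envelope_smallest_supermartingale
    {Ω : Type*} {m0 : MeasurableSpace Ω} {P : Measure Ω} [IsProbabilityMeasure P]
    (ℱ : Filtration ℝ m0) (T : ℝ) (hT : 0 ≤ T)
    (Y X Z : ℝ → Ω → ℝ)
    (hYadp : Adapted ℱ Y)
    (hYrc : ∀ ω t, ContinuousWithinAt (fun s => Y s ω) (Set.Ici t) t)
    (C : ℝ) (hYbdd : ∀ t ω, |Y t ω| ≤ C)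
    (hXsuper : Supermartingale X ℱ P)
    (hXrc : ∀ ω t, ContinuousWithinAt (fun s => X s ω) (Set.Ici t) t)
    (hXdom : ∀ t, ∀ᵐ ω ∂P, Y t ω ≤ X t ω)
    -- `X t` is an a.s. upper bound for the conditional payoffs:
    (hXub : ∀ t ∈ Set.Icc (0:ℝ) T, ∀ τ : Ω → ℝ, IsStoppingTime ℱ (fun ω => (τ ω : WithTop ℝ)) →
      (∀ ω, τ ω ∈ Set.Icc t T) → P[stoppedValue Y (fun ω => (τ ω : WithTop ℝ))|ℱ t] ≤ᵐ[P] X t)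
    -- and it is the least such upper bound (essential supremum property):
    (hXleast : ∀ t ∈ Set.Icc (0:ℝ) T, ∀ U : Ω → ℝ, AEMeasurable U P →
      (∀ τ : Ω → ℝ, IsStoppingTime ℱ (fun ω => (τ ω : WithTop ℝ)) → (∀ ω, τ ω ∈ Set.Icc t T) →
        P[stoppedValue Y (fun ω => (τ ω : WithTop ℝ))|ℱ t] ≤ᵐ[P] U) → X t ≤ᵐ[P] U)
    (hZsuper : Supermartingale Z ℱ P)
    (hZrc : ∀ ω t, ContinuousWithinAt (fun s => Z s ω) (Set.Ici t) t)
    (hZdom : ∀ t ω, Y t ω ≤ Z t ω) :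
    ∀ t ∈ Set.Icc (0:ℝ) T, X t ≤ᵐ[P] Z t := by
  -- helper: bounded measurable functions are integrable
  have hintb : ∀ f : Ω → ℝ, AEStronglyMeasurable f P → (∀ ω, |f ω| ≤ C) → Integrable f P := by
    intro f hf hb
    exact ⟨hf, HasFiniteIntegral.of_bounded (C := C)
      (ae_of_all _ fun ω => by rw [Real.norm_eq_abs]; exact hb ω)⟩
  intro t ht
  refine hXleast t ht (Z t)
    (((hZsuper.stronglyAdapted t).mono (ℱ.le t)).measurable.aemeasurable) ?_
  intro τ hτ hτmem
  rcases eq_or_lt_of_le ht.2 with htT | htT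
  · -- t = T : τ is the constant T
    subst htT
    have hτconst : stoppedValue Y (fun ω => (τ ω : WithTop ℝ)) = Y t := by
      funext ω
      have : τ ω = t := le_antisymm (hτmem ω).2 (hτmem ω).1
      simp [stoppedValue, this]
    rw [hτconst, condExp_of_stronglyMeasurable (ℱ.le t) (hYadp t).stronglyMeasurable
      (hintb _ ((hYadp t).stronglyMeasurable.mono (ℱ.le t)).aestronglyMeasurable (hYbdd t))]
    exact ae_of_all _ (hZdom t)
  · -- t < T : dyadic approximation from above
    set δ : ℕ → ℝ := fun n => (T - t) / 2 ^ n with hδdef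
    have hδpos : ∀ n, 0 < δ n := fun n => div_pos (by linarith) (by positivity)
    set k : ℕ → Ω → ℕ := fun n ω => ⌈(τ ω - t) / δ n⌉₊ with hkdef
    set τa : ℕ → Ω → ℝ := fun n ω => t + k n ω * δ n with hτadef
    have hx0 : ∀ ω, 0 ≤ τ ω - t := fun ω => by have := (hτmem ω).1; linarith
    have hkN : ∀ n ω, k n ω ≤ 2 ^ n := by
      intro n ω
      refine Nat.ceil_le.2 ?_
      rw [div_le_iff₀ (hδpos n)]
      have h2 : ((2 ^ n : ℕ) : ℝ) * δ n = T - t := by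
        rw [hδdef]; push_cast; field_simp
      rw [h2]
      have := (hτmem ω).2; linarith
    have hge : ∀ n ω, τ ω ≤ τa n ω := by
      intro n ω
      have := Nat.le_ceil ((τ ω - t) / δ n)
      rw [div_le_iff₀ (hδpos n)] at this
      simp only [hτadef]; linarith
    have hlt : ∀ n ω, τa n ω ≤ τ ω + δ n := by
      intro n ω
      have h1 : (⌈(τ ω - t) / δ n⌉₊ : ℝ) < (τ ω - t) / δ n + 1 :=
        Nat.ceil_lt_add_one (div_nonneg (hx0 ω) (hδpos n).le)
      have h2 : ((τ ω - t) / δ n + 1) * δ n = τ ω - t + δ n := by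
        rw [add_mul, div_mul_cancel₀ _ (hδpos n).ne', one_mul]
      have := mul_le_mul_of_nonneg_right h1.le (hδpos n).le
      rw [h2] at this
      simp only [hτadef]; linarith
    have hstop : ∀ n (m : ℕ), MeasurableSet[ℱ (t + m * δ n)] {ω | k n ω ≤ m} := by
      intro n m
      have hset : {ω | k n ω ≤ m} = {ω | τ ω ≤ t + m * δ n} := by
        ext ω
        simp only [hkdef, Set.mem_setOf_eq, Nat.ceil_le, div_le_iff₀ (hδpos n)]
        constructor <;> intro h <;> linarith
      rw [hset]
      simpa only [WithTop.coe_le_coe] using hτ (t + m * δ n)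
    -- the approximating stopped values
    set F : ℕ → Ω → ℝ := fun n ω => Y (τa n ω) ω with hFdef
    have hFsm : ∀ n, StronglyMeasurable (F n) := fun n =>
      stronglyMeasurable_grid_stopped ℱ hYadp t (δ n) (hδpos n).le (k n)
        (hstop n) (2 ^ n) (hkN n)
    have hδ0 : Tendsto δ atTop (nhds 0) := by
      have : δ = fun n => (T - t) * (1/2 : ℝ) ^ n := by
        funext n; rw [hδdef]; rw [div_pow, one_pow]; ring
      rw [this]
      have := tendsto_pow_atTop_nhds_zero_of_lt_one (by norm_num : (0:ℝ) ≤ 1/2)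
        (by norm_num : (1/2 : ℝ) < 1)
      simpa using this.const_mul (T - t)
    have hτlim : ∀ ω, Tendsto (fun n => τa n ω) atTop (nhds (τ ω)) := by
      intro ω
      refine tendsto_of_tendsto_of_tendsto_of_le_of_le
        (tendsto_const_nhds) ?_ (fun n => hge n ω) (fun n => hlt n ω)
      simpa using tendsto_const_nhds.add hδ0
    have hlim : ∀ ω, Tendsto (fun n => F n ω) atTop (nhds (stoppedValue Y (fun ω => (τ ω : WithTop ℝ)) ω)) := by
      intro ω
      have hmem : ∀ n, τa n ω ∈ Set.Ici (τ ω) := fun n => hge n ω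
      have h1 : Tendsto (fun n => τa n ω) atTop (nhdsWithin (τ ω) (Set.Ici (τ ω))) :=
        tendsto_nhdsWithin_iff.2 ⟨hτlim ω, Eventually.of_forall hmem⟩
      exact (hYrc ω (τ ω)).tendsto.comp h1
    have hSVsm : StronglyMeasurable (stoppedValue Y (fun ω => (τ ω : WithTop ℝ))) :=
      stronglyMeasurable_of_tendsto atTop hFsm (tendsto_pi_nhds.2 hlim)
    have hSVint : Integrable (stoppedValue Y (fun ω => (τ ω : WithTop ℝ))) P :=
      hintb _ hSVsm.aestronglyMeasurable (fun ω => hYbdd _ ω)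
    refine condexp_le_of_forall_setIntegral_le (ℱ.le t) hSVint
      (hZsuper.integrable t) (hZsuper.stronglyAdapted t) ?_
    intro s hs
    have per_n : ∀ n, ∫ ω in s, F n ω ∂P ≤ ∫ ω in s, Z t ω ∂P := by
      intro n
      refine setIntegral_le_of_grid_stopping ℱ hZsuper t (δ n) (hδpos n).le
        (2 ^ n) (k n) (hkN n) (hstop n) hs
        ((hintb _ (hFsm n).aestronglyMeasurable (fun ω => hYbdd _ ω)).integrableOn) ?_
      intro ω
      exact hZdom _ ω
    have hconv : Tendsto (fun n => ∫ ω in s, F n ω ∂P) atTop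
        (nhds (∫ ω in s, stoppedValue Y (fun ω => (τ ω : WithTop ℝ)) ω ∂P)) := by
      refine tendsto_integral_of_dominated_convergence (fun _ => C)
        (fun n => (hFsm n).aestronglyMeasurable.restrict)
        (integrable_const C) ?_ ?_
      · intro n
        exact ae_of_all _ (fun ω => by rw [Real.norm_eq_abs]; exact hYbdd _ ω)
      · exact ae_of_all _ (fun ω => hlim ω)
    exact le_of_tendsto hconv (Eventually.of_forall per_n)
end

section
/- For stopping times t ≤ θ, suppose for every admissible control u the conditional expectation under P^u of [V(θ) + ∫_t^θ h_s^u ds | F_t] is at least V(t) whenever θ ≤ ϱ_t (the first time after t that V equals the stopping reward), and that V(ϱ_t) equals the stopping reward g(X(ϱ_t)) a.s. Then V(t) = ess inf over u of E^u[ g(X(ϱ_t)) + ∫_t^{ϱ_t} h_s^u ds | F_t ] a.s. -/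
open MeasureTheory Filter

/-- Identification of the value at a stopping time `t` (Proposition 5.4 of
Karatzas–Zamfirescu): if for every admissible control `u` the value process `V`
satisfies the submartingale inequality up to `ϱ_t` (the first time after `t`
that `V` meets the stopping reward `g(X)`), `V(ϱ_t) = g(X(ϱ_t))` a.s., and
`V(t)` is the essential infimum over `u` of the essential suprema (over stopping
rules `τ ∈ [t,T]`) of the conditional expected rewards, then
`V(t) = ess inf over u of E^u[ g(X(ϱ_t)) + ∫_t^{ϱ_t} h^u_s ds | F_t ]` a.s.,
expressed as: `V(t)` is an a.s. lower bound of that family, and every a.e.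
measurable lower bound of the family is a.s. at most `V(t)`. -/
theorem value_process_identification_at_first_meeting_time
    {Ω : Type*} {m0 : MeasurableSpace Ω} (P : Measure Ω) [IsProbabilityMeasure P]
    (ℱ : Filtration ℝ m0) (T : ℝ) (hT : 0 ≤ T)
    {U : Type*} [Nonempty U]
    (Pc : U → Measure Ω) (hPcprob : ∀ u, IsProbabilityMeasure (Pc u))
    (hPcequiv : ∀ u, Pc u ≪ P ∧ P ≪ Pc u)
    (h : U → ℝ → Ω → ℝ) (K : ℝ) (hhbdd : ∀ u s ω, |h u s ω| ≤ K)
    (n : ℕ) (X : ℝ → Ω → (Fin n → ℝ)) (g : (Fin n → ℝ) → ℝ)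
    (V : ℝ → Ω → ℝ) (CV : ℝ) (hVbdd : ∀ s ω, |V s ω| ≤ CV)
    (hVrc : ∀ ω s, ContinuousWithinAt (fun r => V r ω) (Set.Ici s) s)
    (hVdomg : ∀ s ω, g (X s ω) ≤ V s ω)
    (t ϱ : Ω → ℝ) (ht : IsStoppingTime ℱ (fun ω => ((t ω : ℝ) : WithTop ℝ))) (hϱ : IsStoppingTime ℱ (fun ω => ((ϱ ω : ℝ) : WithTop ℝ)))
    (hord : ∀ ω, 0 ≤ t ω ∧ t ω ≤ ϱ ω ∧ ϱ ω ≤ T)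
    -- `ϱ` is the first time after `t` that `V` meets the stopping reward:
    (hϱfirst : ∀ᵐ ω ∂P, ∀ s, t ω ≤ s → s < ϱ ω → g (X s ω) < V s ω)
    -- submartingale inequality up to `ϱ`:
    (hsub : ∀ u, ∀ θ : Ω → ℝ, IsStoppingTime ℱ (fun ω => ((θ ω : ℝ) : WithTop ℝ)) → (∀ ω, t ω ≤ θ ω ∧ θ ω ≤ ϱ ω) →
      stoppedValue V (fun ω => ((t ω : ℝ) : WithTop ℝ)) ≤ᵐ[Pc u]
        (Pc u)[fun ω => stoppedValue V (fun ω => ((θ ω : ℝ) : WithTop ℝ)) ω + ∫ s in Set.Ioc (t ω) (θ ω), h u s ω|ht.measurableSpace])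
    -- `V(ϱ) = g(X(ϱ))` a.s.:
    (hmeet : ∀ᵐ ω ∂P, V (ϱ ω) ω = g (X (ϱ ω) ω))
    -- `V(t)` is the ess inf over `u` of the ess sups `Zs u` over stopping rules `τ ∈ [t,T]`:
    (Zs : U → Ω → ℝ)
    (hZub : ∀ u, ∀ τ : Ω → ℝ, IsStoppingTime ℱ (fun ω => ((τ ω : ℝ) : WithTop ℝ)) → (∀ ω, t ω ≤ τ ω ∧ τ ω ≤ T) →
      (Pc u)[fun ω => g (X (τ ω) ω) + ∫ s in Set.Ioc (t ω) (τ ω), h u s ω|ht.measurableSpace]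
        ≤ᵐ[Pc u] Zs u)
    (hZleast : ∀ u, ∀ Y : Ω → ℝ, AEMeasurable Y P →
      (∀ τ : Ω → ℝ, IsStoppingTime ℱ (fun ω => ((τ ω : ℝ) : WithTop ℝ)) → (∀ ω, t ω ≤ τ ω ∧ τ ω ≤ T) →
        (Pc u)[fun ω => g (X (τ ω) ω) + ∫ s in Set.Ioc (t ω) (τ ω), h u s ω|ht.measurableSpace]
          ≤ᵐ[Pc u] Y) →
      Zs u ≤ᵐ[Pc u] Y)
    (hVlb : ∀ u, stoppedValue V (fun ω => ((t ω : ℝ) : WithTop ℝ)) ≤ᵐ[P] Zs u)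
    (hVgreatest : ∀ Y : Ω → ℝ, AEMeasurable Y P → (∀ u, Y ≤ᵐ[P] Zs u) →
      Y ≤ᵐ[P] stoppedValue V (fun ω => ((t ω : ℝ) : WithTop ℝ))) :
    (∀ u, stoppedValue V (fun ω => ((t ω : ℝ) : WithTop ℝ)) ≤ᵐ[P]
      (Pc u)[fun ω => g (X (ϱ ω) ω) + ∫ s in Set.Ioc (t ω) (ϱ ω), h u s ω|ht.measurableSpace]) ∧
    (∀ Y : Ω → ℝ, AEMeasurable Y P →
      (∀ u, Y ≤ᵐ[P]
        (Pc u)[fun ω => g (X (ϱ ω) ω) + ∫ s in Set.Ioc (t ω) (ϱ ω), h u s ω|ht.measurableSpace]) →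
      Y ≤ᵐ[P] stoppedValue V (fun ω => ((t ω : ℝ) : WithTop ℝ))) := by
  constructor
  · intro u
    have h1 := hsub u ϱ hϱ (fun ω => ⟨(hord ω).2.1, le_refl _⟩)
    have heq : (fun ω => stoppedValue V (fun ω => ((ϱ ω : ℝ) : WithTop ℝ)) ω + ∫ s in Set.Ioc (t ω) (ϱ ω), h u s ω)
        =ᵐ[Pc u] (fun ω => g (X (ϱ ω) ω) + ∫ s in Set.Ioc (t ω) (ϱ ω), h u s ω) := by
      filter_upwards [hmeet.filter_mono (hPcequiv u).1.ae_le] with ω hω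
      simp [stoppedValue, hω]
    have h2 := condExp_congr_ae (m := ht.measurableSpace) heq
    exact (h1.trans h2.le).filter_mono (hPcequiv u).2.ae_le
  · intro Y hY hYle
    apply hVgreatest Y hY
    intro u
    have h1 := hZub u ϱ hϱ (fun ω => ⟨(hord ω).2.1, (hord ω).2.2⟩)
    have h2 : Y ≤ᵐ[Pc u]
        (Pc u)[fun ω => g (X (ϱ ω) ω) + ∫ s in Set.Ioc (t ω) (ϱ ω), h u s ω|ht.measurableSpace] :=
      (hYle u).filter_mono (hPcequiv u).1.ae_le
    exact (h2.trans h1).filter_mono (hPcequiv u).2.ae_le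
end

section
/- (Necessity half of saddle characterization.) If (u*, τ*) is a saddle point of the game, then g(X(τ*)) = V(τ*) a.s., where V(τ*) is the value of the game at time τ*, given that: (a) R^{u*}(·∧ϱ_{τ*}) is a P^{u*}-submartingale (with ϱ_{τ*} the first time after τ* that V meets g(X)); (b) Y^{u*}(τ) ≤ R^{u*}(τ) a.s. for every stopping time τ, with equality at τ = ϱ_{τ*}; and (c) E^{u*}[Y^{u*}(τ)] ≤ E^{u*}[Y^{u*}(τ*)] for all stopping times τ. -/
open MeasureTheory Filter

private lemma measurable_comp_countable'
    {Ω : Type*} {m0 : MeasurableSpace Ω} {F : ℤ → Ω → ℝ}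
    (hF : ∀ k, Measurable (F k)) {g : Ω → ℤ} (hg : Measurable g) :
    Measurable (fun ω => F (g ω) ω) := by
  have : (fun ω => F (g ω) ω) = fun ω => (fun p : Ω × ℤ => F p.2 p.1) (ω, g ω) := rfl
  rw [this]
  exact (measurable_from_prod_countable_left (f := fun p : Ω × ℤ => F p.2 p.1) fun k => hF k).comp (measurable_id.prodMk hg)

private lemma measurable_stoppedValue_of_rightContinuous
    {Ω : Type*} {m0 : MeasurableSpace Ω} (u : ℝ → Ω → ℝ)
    (hmeas : ∀ t, Measurable (u t))
    (hrc : ∀ ω t, ContinuousWithinAt (fun s => u s ω) (Set.Ici t) t)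
    {τ : Ω → ℝ} (hτ : Measurable τ) :
    Measurable (stoppedValue u (fun ω => (τ ω : WithTop ℝ))) := by
  set σ : ℕ → Ω → ℝ := fun n ω => (⌈τ ω * 2 ^ n⌉ : ℝ) / 2 ^ n with hσ
  have hσmeas : ∀ n, Measurable (fun ω => u (σ n ω) ω) := by
    intro n
    have : (fun ω => u (σ n ω) ω)
        = fun ω => (fun k : ℤ => u ((k : ℝ) / 2 ^ n)) (⌈τ ω * 2 ^ n⌉) ω := rfl
    rw [this]
    exact measurable_comp_countable' (F := fun k => u ((k:ℝ)/2^n)) (fun k => hmeas _)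
      (Int.measurable_ceil.comp (hτ.mul_const _))
  have hge : ∀ n ω, τ ω ≤ σ n ω := by
    intro n ω
    rw [hσ, le_div_iff₀ (by positivity)]
    exact Int.le_ceil _
  have hle : ∀ n ω, σ n ω ≤ τ ω + 1 / 2 ^ n := by
    intro n ω
    rw [hσ, div_le_iff₀ (by positivity), add_mul, one_div,
      inv_mul_cancel₀ (by positivity)]
    exact le_of_lt (Int.ceil_lt_add_one _)
  have htend : ∀ ω, Tendsto (fun n => u (σ n ω) ω) atTop
      (nhds (stoppedValue u (fun ω => (τ ω : WithTop ℝ)) ω)) := by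
    intro ω
    have hσt : Tendsto (fun n => σ n ω) atTop (nhds (τ ω)) := by
      have h0 : Tendsto (fun n : ℕ => ((1:ℝ)/2) ^ n) atTop (nhds 0) :=
        tendsto_pow_atTop_nhds_zero_of_lt_one (by norm_num) (by norm_num)
      simp only [one_div, inv_pow] at h0
      have h1 : Tendsto (fun n : ℕ => τ ω + 1 / 2 ^ n) atTop (nhds (τ ω + 0)) := by
        simpa only [one_div] using tendsto_const_nhds.add h0
      rw [add_zero] at h1
      exact tendsto_of_tendsto_of_tendsto_of_le_of_le tendsto_const_nhds h1
        (fun n => hge n ω) (fun n => hle n ω)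
    have hσin : ∀ n, σ n ω ∈ Set.Ici (τ ω) := fun n => hge n ω
    have := (hrc ω (τ ω)).tendsto.comp
      (tendsto_nhdsWithin_iff.mpr ⟨hσt, Eventually.of_forall hσin⟩)
    exact this
  exact measurable_of_tendsto_metrizable hσmeas (tendsto_pi_nhds.mpr htend)

/-- Necessity half of the saddle characterization: if `(u*, τ*)` is a saddle
point, then `g(X(τ*)) = V(τ*)` a.s. Here `Y` plays the role of the total reward
process `Y^{u*}` and `R` of `R^{u*} = V + ∫ h^{u*}`, with `R ≥ Y` pathwise;
`ϱ` is the first time after `τ*` that `V` meets `g(X)`, so that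
`R(ϱ) = Y(ϱ)` a.s.; hypothesis (a) is the submartingale (optional sampling)
inequality between `τ*` and `ϱ`, and (c) is the first saddle inequality. The
conclusion `Y(τ*) = R(τ*)` a.s. is exactly `g(X(τ*)) = V(τ*)` a.s. -/
theorem saddle_necessity_value_meets_reward
    {Ω : Type*} {m0 : MeasurableSpace Ω} (Q : Measure Ω) [IsProbabilityMeasure Q]
    (ℱ : Filtration ℝ m0) (T : ℝ) (hT : 0 ≤ T)
    (Y R : ℝ → Ω → ℝ)
    (hYadp : Adapted ℱ Y) (hRadp : Adapted ℱ R)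
    (hYrc : ∀ ω t, ContinuousWithinAt (fun s => Y s ω) (Set.Ici t) t)
    (hRrc : ∀ ω t, ContinuousWithinAt (fun s => R s ω) (Set.Ici t) t)
    (C : ℝ) (hYbdd : ∀ t ω, |Y t ω| ≤ C) (hRbdd : ∀ t ω, |R t ω| ≤ C)
    (hdom : ∀ t ω, Y t ω ≤ R t ω)
    (τstar ϱ : Ω → ℝ)
    (hτstar : IsStoppingTime ℱ (fun ω => (τstar ω : WithTop ℝ))) (hϱ : IsStoppingTime ℱ (fun ω => (ϱ ω : WithTop ℝ)))
    (hord : ∀ ω, 0 ≤ τstar ω ∧ τstar ω ≤ ϱ ω ∧ ϱ ω ≤ T)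
    -- (a) submartingale inequality between `τ*` and `ϱ`:
    (ha : stoppedValue R (fun ω => (τstar ω : WithTop ℝ)) ≤ᵐ[Q] Q[stoppedValue R (fun ω => (ϱ ω : WithTop ℝ))|hτstar.measurableSpace])
    -- (b) equality of reward and value at `ϱ`:
    (hb : stoppedValue R (fun ω => (ϱ ω : WithTop ℝ)) =ᵐ[Q] stoppedValue Y (fun ω => (ϱ ω : WithTop ℝ)))
    -- (c) first saddle inequality: `τ*` is optimal for the stopper against `u*`:
    (hc : ∀ τ : Ω → ℝ, IsStoppingTime ℱ (fun ω => (τ ω : WithTop ℝ)) → (∀ ω, τ ω ∈ Set.Icc (0:ℝ) T) →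
      ∫ ω, stoppedValue Y (fun ω => (τ ω : WithTop ℝ)) ω ∂Q ≤ ∫ ω, stoppedValue Y (fun ω => (τstar ω : WithTop ℝ)) ω ∂Q) :
    stoppedValue Y (fun ω => (τstar ω : WithTop ℝ)) =ᵐ[Q] stoppedValue R (fun ω => (τstar ω : WithTop ℝ)) := by
  -- Measurability of the various stopped values
  have hYm : ∀ t, Measurable (Y t) := fun t => (hYadp t).mono (ℱ.le t) le_rfl
  have hRm : ∀ t, Measurable (R t) := fun t => (hRadp t).mono (ℱ.le t) le_rfl
  have hτm : Measurable τstar := (hτstar.measurable.mono hτstar.measurableSpace_le le_rfl).untopA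
  have hϱm : Measurable ϱ := (hϱ.measurable.mono hϱ.measurableSpace_le le_rfl).untopA
  have hYτ : Measurable (stoppedValue Y (fun ω => (τstar ω : WithTop ℝ))) :=
    measurable_stoppedValue_of_rightContinuous Y hYm hYrc hτm
  have hRτ : Measurable (stoppedValue R (fun ω => (τstar ω : WithTop ℝ))) :=
    measurable_stoppedValue_of_rightContinuous R hRm hRrc hτm
  have hYϱ : Measurable (stoppedValue Y (fun ω => (ϱ ω : WithTop ℝ))) :=
    measurable_stoppedValue_of_rightContinuous Y hYm hYrc hϱm
  have hRϱ : Measurable (stoppedValue R (fun ω => (ϱ ω : WithTop ℝ))) :=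
    measurable_stoppedValue_of_rightContinuous R hRm hRrc hϱm
  -- Integrability from boundedness
  have hint : ∀ (f : Ω → ℝ), Measurable f → (∀ ω, |f ω| ≤ C) → Integrable f Q := by
    intro f hf hb
    exact ⟨hf.aestronglyMeasurable,
      HasFiniteIntegral.of_bounded (C := C) (ae_of_all _ fun ω => hb ω)⟩
  have hiYτ : Integrable (stoppedValue Y (fun ω => (τstar ω : WithTop ℝ))) Q :=
    hint _ hYτ fun ω => hYbdd _ _
  have hiRτ : Integrable (stoppedValue R (fun ω => (τstar ω : WithTop ℝ))) Q :=
    hint _ hRτ fun ω => hRbdd _ _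
  have hiRϱ : Integrable (stoppedValue R (fun ω => (ϱ ω : WithTop ℝ))) Q :=
    hint _ hRϱ fun ω => hRbdd _ _
  -- chain of integral inequalities
  have h1 : ∫ ω, stoppedValue R (fun ω => (τstar ω : WithTop ℝ)) ω ∂Q
      ≤ ∫ ω, (Q[stoppedValue R (fun ω => (ϱ ω : WithTop ℝ))|hτstar.measurableSpace]) ω ∂Q :=
    integral_mono_ae hiRτ integrable_condExp ha
  have h2 : ∫ ω, (Q[stoppedValue R (fun ω => (ϱ ω : WithTop ℝ))|hτstar.measurableSpace]) ω ∂Q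
      = ∫ ω, stoppedValue R (fun ω => (ϱ ω : WithTop ℝ)) ω ∂Q :=
    integral_condExp hτstar.measurableSpace_le
  have h3 : ∫ ω, stoppedValue R (fun ω => (ϱ ω : WithTop ℝ)) ω ∂Q = ∫ ω, stoppedValue Y (fun ω => (ϱ ω : WithTop ℝ)) ω ∂Q :=
    integral_congr_ae hb
  have h4 : ∫ ω, stoppedValue Y (fun ω => (ϱ ω : WithTop ℝ)) ω ∂Q ≤ ∫ ω, stoppedValue Y (fun ω => (τstar ω : WithTop ℝ)) ω ∂Q :=
    hc ϱ hϱ fun ω => ⟨(hord ω).1.trans (hord ω).2.1, (hord ω).2.2⟩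
  have hchain : ∫ ω, stoppedValue R (fun ω => (τstar ω : WithTop ℝ)) ω ∂Q ≤ ∫ ω, stoppedValue Y (fun ω => (τstar ω : WithTop ℝ)) ω ∂Q := by
    calc ∫ ω, stoppedValue R (fun ω => (τstar ω : WithTop ℝ)) ω ∂Q
        ≤ ∫ ω, (Q[stoppedValue R (fun ω => (ϱ ω : WithTop ℝ))|hτstar.measurableSpace]) ω ∂Q := h1
      _ = ∫ ω, stoppedValue R (fun ω => (ϱ ω : WithTop ℝ)) ω ∂Q := h2
      _ = ∫ ω, stoppedValue Y (fun ω => (ϱ ω : WithTop ℝ)) ω ∂Q := h3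
      _ ≤ ∫ ω, stoppedValue Y (fun ω => (τstar ω : WithTop ℝ)) ω ∂Q := h4
  -- nonnegative integrand with nonpositive integral
  set f : Ω → ℝ := fun ω => stoppedValue R (fun ω => (τstar ω : WithTop ℝ)) ω - stoppedValue Y (fun ω => (τstar ω : WithTop ℝ)) ω with hf
  have hfnn : ∀ ω, 0 ≤ f ω := fun ω => sub_nonneg.mpr (hdom _ _)
  have hfint : Integrable f Q := hiRτ.sub hiYτ
  have hfzero : ∫ ω, f ω ∂Q = 0 := by
    have : ∫ ω, f ω ∂Q ≤ 0 := by
      rw [hf]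
      rw [integral_sub hiRτ hiYτ]
      linarith
    have h0 : 0 ≤ ∫ ω, f ω ∂Q := integral_nonneg hfnn
    linarith
  have := (integral_eq_zero_iff_of_nonneg hfnn hfint).mp hfzero
  filter_upwards [this] with ω hω
  have : f ω = 0 := hω
  rw [hf] at this
  simp only at this
  linarith [sub_eq_zero.mp this]
end

section
/- (Gluing inequality for stopping times.) Let Y be a bounded right-continuous adapted process and τ* a stopping time such that: (i) for every stopping time ρ ≤ τ*, Y_ρ ≤ E[Y_{τ*} | F_ρ] a.s.; and (ii) for every stopping time ν ≥ τ*, E[Y_ν | F_{τ*}] ≤ Y_{τ*} a.s. Then for every stopping time τ (not necessarily comparable with τ*), E[Y_τ] ≤ E[Y_{τ*}]. -/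
open MeasureTheory Filter

/-- Composing a measurable countably-valued function into a family of measurable
functions is measurable. -/
lemma measurable_comp_countable_range {Ω : Type*} {m0 : MeasurableSpace Ω}
    (Y : ℝ → Ω → ℝ) (hY : ∀ t, Measurable (Y t)) {f : Ω → ℝ}
    (hf : Measurable f) (hc : (Set.range f).Countable) :
    Measurable fun ω => Y (f ω) ω := by
  intro s hs
  have : (fun ω => Y (f ω) ω) ⁻¹' s
      = ⋃ t ∈ Set.range f, (f ⁻¹' {t} ∩ Y t ⁻¹' s) := by
    ext ω
    simp only [Set.mem_preimage, Set.mem_iUnion, Set.mem_inter_iff, Set.mem_singleton_iff]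
    constructor
    · intro h; exact ⟨f ω, ⟨ω, rfl⟩, rfl, h⟩
    · rintro ⟨t, _, rfl, h⟩; exact h
  rw [this]
  exact MeasurableSet.biUnion hc fun t _ =>
    (hf (measurableSet_singleton t)).inter (hY t hs)

/-- stopped value of a right-continuous process with measurable sections at a
measurable time is measurable. -/
lemma measurable_stoppedValue_of_rc {Ω : Type*} {m0 : MeasurableSpace Ω}
    (Y : ℝ → Ω → ℝ) (hY : ∀ t, Measurable (Y t))
    (hYrc : ∀ ω t, ContinuousWithinAt (fun s => Y s ω) (Set.Ici t) t)
    {σ : Ω → ℝ} (hσ : Measurable σ) :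
    Measurable (stoppedValue Y (fun ω => (σ ω : WithTop ℝ))) := by
  set g : ℕ → Ω → ℝ := fun n ω => Y ((⌈σ ω * 2 ^ n⌉ : ℤ) / 2 ^ n) ω with hg
  have hσn_meas : ∀ n : ℕ, Measurable fun ω => ((⌈σ ω * 2 ^ n⌉ : ℤ) / 2 ^ n : ℝ) :=
    fun n => (measurable_from_top.comp (Measurable.ceil (hσ.mul_const _))).div_const _
  have hσn_count : ∀ n : ℕ, (Set.range fun ω => ((⌈σ ω * 2 ^ n⌉ : ℤ) / 2 ^ n : ℝ)).Countable := by
    intro n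
    apply Set.Countable.mono _ (Set.countable_range fun z : ℤ => ((z : ℝ) / 2 ^ n))
    rintro x ⟨ω, rfl⟩
    exact ⟨⌈σ ω * 2 ^ n⌉, rfl⟩
  have hg_meas : ∀ n, Measurable (g n) := fun n =>
    measurable_comp_countable_range Y hY (hσn_meas n) (hσn_count n)
  have hpos : ∀ n : ℕ, (0:ℝ) < 2 ^ n := fun n => by positivity
  have hge : ∀ n ω, σ ω ≤ ((⌈σ ω * 2 ^ n⌉ : ℤ) / 2 ^ n : ℝ) := by
    intro n ω
    rw [le_div_iff₀ (hpos n)]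
    exact Int.le_ceil _
  have hlt : ∀ n ω, ((⌈σ ω * 2 ^ n⌉ : ℤ) / 2 ^ n : ℝ) ≤ σ ω + 1 / 2 ^ n := by
    intro n ω
    rw [div_le_iff₀ (hpos n)]
    calc ((⌈σ ω * 2 ^ n⌉ : ℤ) : ℝ) ≤ σ ω * 2 ^ n + 1 := (Int.ceil_lt_add_one (σ ω * 2 ^ n)).le
      _ = (σ ω + 1 / 2 ^ n) * 2 ^ n := by field_simp
  have htend : Tendsto g atTop (nhds (stoppedValue Y (fun ω => (σ ω : WithTop ℝ)))) := by
    rw [tendsto_pi_nhds]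
    intro ω
    have hτn : Tendsto (fun n : ℕ => ((⌈σ ω * 2 ^ n⌉ : ℤ) / 2 ^ n : ℝ)) atTop
        (nhdsWithin (σ ω) (Set.Ici (σ ω))) := by
      apply tendsto_nhdsWithin_of_tendsto_nhds_of_eventually_within
      · apply tendsto_of_tendsto_of_tendsto_of_le_of_le
          (tendsto_const_nhds) ?_ (fun n => hge n ω) (fun n => hlt n ω)
        have h2 : Tendsto (fun n : ℕ => (1:ℝ) / 2 ^ n) atTop (nhds 0) := by
          simpa using tendsto_pow_atTop_nhds_zero_of_lt_one (by norm_num : (0:ℝ) ≤ 1/2)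
            (by norm_num : (1:ℝ)/2 < 1) |>.const_mul (1:ℝ) |>.congr (fun n => by
              rw [one_div, ← inv_pow]; ring)
        simpa using tendsto_const_nhds.add h2
      · exact Eventually.of_forall fun n => hge n ω
    exact ((hYrc ω (σ ω)).tendsto).comp hτn
  exact measurable_of_tendsto_metrizable' atTop hg_meas htend

/-- Gluing inequality for stopping times: if `Y_ρ ≤ E[Y_{τ*} | F_ρ]` a.s. for
every stopping time `ρ ≤ τ*`, and `E[Y_ν | F_{τ*}] ≤ Y_{τ*}` a.s. for every
stopping time `ν ≥ τ*`, then `E[Y_τ] ≤ E[Y_{τ*}]` for every stopping time `τ`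
(not necessarily comparable with `τ*`). -/
theorem gluing_inequality_for_stopping_times
    {Ω : Type*} {m0 : MeasurableSpace Ω} (P : Measure Ω) [IsProbabilityMeasure P]
    (ℱ : Filtration ℝ m0) (T : ℝ) (hT : 0 ≤ T)
    (Y : ℝ → Ω → ℝ)
    (hYadp : Adapted ℱ Y)
    (hYrc : ∀ ω t, ContinuousWithinAt (fun s => Y s ω) (Set.Ici t) t)
    (C : ℝ) (hYbdd : ∀ t ω, |Y t ω| ≤ C)
    (τstar : Ω → ℝ) (hτstar : IsStoppingTime ℱ (fun ω => (τstar ω : WithTop ℝ)))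
    (hτstarT : ∀ ω, τstar ω ∈ Set.Icc (0:ℝ) T)
    (hbefore : ∀ ρ : Ω → ℝ, (hρ : IsStoppingTime ℱ (fun ω => (ρ ω : WithTop ℝ))) → (∀ ω, 0 ≤ ρ ω ∧ ρ ω ≤ τstar ω) →
      stoppedValue Y (fun ω => (ρ ω : WithTop ℝ)) ≤ᵐ[P] P[stoppedValue Y (fun ω => (τstar ω : WithTop ℝ))|hρ.measurableSpace])
    (hafter : ∀ ν : Ω → ℝ, IsStoppingTime ℱ (fun ω => (ν ω : WithTop ℝ)) → (∀ ω, τstar ω ≤ ν ω ∧ ν ω ≤ T) →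
      P[stoppedValue Y (fun ω => (ν ω : WithTop ℝ))|hτstar.measurableSpace] ≤ᵐ[P] stoppedValue Y (fun ω => (τstar ω : WithTop ℝ))) :
    ∀ τ : Ω → ℝ, IsStoppingTime ℱ (fun ω => (τ ω : WithTop ℝ)) → (∀ ω, τ ω ∈ Set.Icc (0:ℝ) T) →
      ∫ ω, stoppedValue Y (fun ω => (τ ω : WithTop ℝ)) ω ∂P ≤ ∫ ω, stoppedValue Y (fun ω => (τstar ω : WithTop ℝ)) ω ∂P := by
  intro τ hτ hτT
  -- basic measurability facts
  have hYm : ∀ t, Measurable (Y t) := fun t => (hYadp t).mono (ℱ.le t) le_rfl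
  -- the min and max stopping times
  set ρ : Ω → ℝ := fun ω => min (τ ω) (τstar ω) with hρ_def
  set ν : Ω → ℝ := fun ω => max (τ ω) (τstar ω) with hν_def
  have hρ : IsStoppingTime ℱ (fun ω => (ρ ω : WithTop ℝ)) := hτ.min hτstar
  have hν : IsStoppingTime ℱ (fun ω => (ν ω : WithTop ℝ)) := hτ.max hτstar
  -- integrability of stopped values
  have hint : ∀ (σ : Ω → ℝ), Measurable σ → Integrable (stoppedValue Y (fun ω => (σ ω : WithTop ℝ))) P := by
    intro σ hσ
    refine ⟨(measurable_stoppedValue_of_rc Y hYm hYrc hσ).aestronglyMeasurable, ?_⟩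
    refine HasFiniteIntegral.of_bounded (C := C) (ae_of_all _ fun ω => ?_)
    exact (by simpa [Real.norm_eq_abs] using hYbdd (σ ω) ω : ‖Y (σ ω) ω‖ ≤ C)
  have hint_τ : Integrable (stoppedValue Y (fun ω => (τ ω : WithTop ℝ))) P := hint τ (hτ.measurable'.untopA)
  have hint_star : Integrable (stoppedValue Y (fun ω => (τstar ω : WithTop ℝ))) P := hint τstar (hτstar.measurable'.untopA)
  have hint_ρ : Integrable (stoppedValue Y (fun ω => (ρ ω : WithTop ℝ))) P := hint ρ (hρ.measurable'.untopA)
  have hint_ν : Integrable (stoppedValue Y (fun ω => (ν ω : WithTop ℝ))) P := hint ν (hν.measurable'.untopA)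
  -- the event A = {τ ≤ τstar}
  set A : Set Ω := {ω | τ ω ≤ τstar ω} with hA_def
  have hAeq : A = {ω | (τ ω : WithTop ℝ) ≤ (τstar ω : WithTop ℝ)} := by
    ext ω; simp only [hA_def, Set.mem_setOf_eq, WithTop.coe_le_coe]
  have hA_minmeas : MeasurableSet[(hτ.min hτstar).measurableSpace] A := by
    rw [hAeq]
    rw [IsStoppingTime.measurableSet_min_iff hτ hτstar]
    exact ⟨IsStoppingTime.measurableSet_le_stopping_time hτ hτstar,
      IsStoppingTime.measurableSet_stopping_time_le hτ hτstar⟩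
  have hA_ρ : MeasurableSet[hρ.measurableSpace] A := hA_minmeas
  have hA_star : MeasurableSet[hτstar.measurableSpace] A := hAeq ▸
    IsStoppingTime.measurableSet_stopping_time_le hτ hτstar
  have hA : MeasurableSet A := hρ.measurableSpace_le A hA_ρ
  -- pointwise identities
  have hon_A : ∀ ω ∈ A, stoppedValue Y (fun ω => (τ ω : WithTop ℝ)) ω = stoppedValue Y (fun ω => (ρ ω : WithTop ℝ)) ω := by
    intro ω hω
    have h : τ ω ≤ τstar ω := hω
    simp only [stoppedValue]
    exact congrFun (congrArg Y (min_eq_left h).symm) ω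
  have hon_Ac : ∀ ω ∈ Aᶜ, stoppedValue Y (fun ω => (τ ω : WithTop ℝ)) ω = stoppedValue Y (fun ω => (ν ω : WithTop ℝ)) ω := by
    intro ω hω
    have : τstar ω ≤ τ ω := le_of_lt (not_le.mp hω)
    simp only [stoppedValue]
    exact congrFun (congrArg Y (max_eq_left this).symm) ω
  -- split the integral
  have hsplit : ∫ ω, stoppedValue Y (fun ω => (τ ω : WithTop ℝ)) ω ∂P
      = (∫ ω in A, stoppedValue Y (fun ω => (ρ ω : WithTop ℝ)) ω ∂P) + ∫ ω in Aᶜ, stoppedValue Y (fun ω => (ν ω : WithTop ℝ)) ω ∂P := by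
    rw [← integral_add_compl hA hint_τ]
    congr 1
    · exact setIntegral_congr_fun hA hon_A
    · exact setIntegral_congr_fun hA.compl hon_Ac
  have hsplit_star : ∫ ω, stoppedValue Y (fun ω => (τstar ω : WithTop ℝ)) ω ∂P
      = (∫ ω in A, stoppedValue Y (fun ω => (τstar ω : WithTop ℝ)) ω ∂P) + ∫ ω in Aᶜ, stoppedValue Y (fun ω => (τstar ω : WithTop ℝ)) ω ∂P :=
    (integral_add_compl hA hint_star).symm
  -- first piece: on A use hbefore with ρ
  have hρ_le : ∀ ω, 0 ≤ ρ ω ∧ ρ ω ≤ τstar ω := fun ω =>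
    ⟨le_min (hτT ω).1 (hτstarT ω).1, min_le_right _ _⟩
  have h1 : (∫ ω in A, stoppedValue Y (fun ω => (ρ ω : WithTop ℝ)) ω ∂P) ≤ ∫ ω in A, stoppedValue Y (fun ω => (τstar ω : WithTop ℝ)) ω ∂P := by
    calc (∫ ω in A, stoppedValue Y (fun ω => (ρ ω : WithTop ℝ)) ω ∂P)
        ≤ ∫ ω in A, (P[stoppedValue Y (fun ω => (τstar ω : WithTop ℝ))|hρ.measurableSpace]) ω ∂P := by
          refine setIntegral_mono_ae_restrict hint_ρ.integrableOn
            integrable_condExp.integrableOn (ae_restrict_of_ae ?_)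
          exact hbefore ρ hρ hρ_le
      _ = ∫ ω in A, stoppedValue Y (fun ω => (τstar ω : WithTop ℝ)) ω ∂P :=
          setIntegral_condExp hρ.measurableSpace_le hint_star hA_ρ
  -- second piece: on Aᶜ use hafter with ν
  have hν_ge : ∀ ω, τstar ω ≤ ν ω ∧ ν ω ≤ T := fun ω =>
    ⟨le_max_right _ _, max_le (hτT ω).2 (hτstarT ω).2⟩
  have h2 : (∫ ω in Aᶜ, stoppedValue Y (fun ω => (ν ω : WithTop ℝ)) ω ∂P) ≤ ∫ ω in Aᶜ, stoppedValue Y (fun ω => (τstar ω : WithTop ℝ)) ω ∂P := by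
    calc (∫ ω in Aᶜ, stoppedValue Y (fun ω => (ν ω : WithTop ℝ)) ω ∂P)
        = ∫ ω in Aᶜ, (P[stoppedValue Y (fun ω => (ν ω : WithTop ℝ))|hτstar.measurableSpace]) ω ∂P :=
          (setIntegral_condExp hτstar.measurableSpace_le hint_ν hA_star.compl).symm
      _ ≤ ∫ ω in Aᶜ, stoppedValue Y (fun ω => (τstar ω : WithTop ℝ)) ω ∂P := by
          refine setIntegral_mono_ae_restrict integrable_condExp.integrableOn
            hint_star.integrableOn (ae_restrict_of_ae ?_)
          exact hafter ν hν hν_ge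
  rw [hsplit, hsplit_star]
  exact add_le_add h1 h2
end
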